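/- Let T be a finite tree whose leaves are enumerated without repetition as c_0, …, c_{k−1} (k ≥ 3), let i be an index, and let r be an internal vertex lying on the path in T from c_i to c_{(i+1) mod k}. Suppose that for every internal vertex u of T, L^r(u) is cyclically consecutive. Then for every internal vertex u, L^r(u) is consecutive in the linear ordering c_{(i+1) mod k}, c_{(i+2) mod k}, …, c_{(i+k) mod k}; that is, there exist integers s, m with 1 ≤ s, m ≥ 0 and s+m ≤ k such that L^r(u) = {c_{(i+t) mod k} : s ≤ t ≤ s+m}. -/

import Mathlib

open SimpleGraph Set Function

/-- `u` is an ancestor of `v` with respect to root `r`: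
`u` lies on the unique path in `T` from `r` to `v`. -/
def IsAncestor {V : Type*} (T : SimpleGraph V) (r u v : V) : Prop :=
  ∀ p : T.Walk r v, p.IsPath → u ∈ p.support

/-- `u` is the parent of `v` with respect to root `r`. -/
def IsParent {V : Type*} (T : SimpleGraph V) (r u v : V) : Prop :=
  IsAncestor T r u v ∧ u ≠ v ∧ T.Adj u v

/-- `L^r(u)`: the set of leaves of `T` that are descendants of `u`. -/
def LeafSet {V : Type*} (T : SimpleGraph V) [Fintype V] [DecidableRel T.Adj] (r u : V) :
    Set V :=
  {c | T.degree c = 1 ∧ IsAncestor T r u c}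

/-- The leaf `c_{j mod k}` index. -/
def cidx {k : ℕ} (hk : 0 < k) (j : ℕ) : Fin k := ⟨j % k, Nat.mod_lt _ hk⟩

/-- A set `A` of leaves is cyclically consecutive with respect to the enumeration `c`. -/
def CycConsec {V : Type*} {k : ℕ} (hk : 0 < k) (c : Fin k → V) (A : Set V) : Prop :=
  ∃ j m : ℕ, A = {x | ∃ t ≤ m, x = c (cidx hk (j + t))}

lemma cidx_congr {k : ℕ} (hk : 0 < k) {a b : ℕ} (h : a % k = b % k) :
    cidx hk a = cidx hk b := by
  simp [cidx, h]

/-- If `r` is an internal vertex on the path from `c_i` to `c_{(i+1) mod k}`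
and each `L^r(u)` is cyclically consecutive, then each `L^r(u)` is consecutive in the
linear order `c_{(i+1) mod k}, …, c_{(i+k) mod k}`. -/
theorem stmt2 {V : Type*} [Fintype V] (T : SimpleGraph V) [DecidableRel T.Adj]
    (hT : T.IsTree) {k : ℕ} (hk : 3 ≤ k) (c : Fin k → V)
    (hinj : Function.Injective c)
    (hleaf : ∀ v : V, T.degree v = 1 ↔ ∃ i : Fin k, v = c i)
    (i : Fin k) (r : V) (hrint : 2 ≤ T.degree r)
    (hrpath : ∀ p : T.Walk (c i) (c (cidx (by omega) ((i : ℕ) + 1))),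
      p.IsPath → r ∈ p.support)
    (hcyc : ∀ u : V, 2 ≤ T.degree u → CycConsec (by omega) c (LeafSet T r u)) :
    ∀ u : V, 2 ≤ T.degree u →
      ∃ s m : ℕ, 1 ≤ s ∧ s + m ≤ k ∧
        LeafSet T r u =
          {x | ∃ t, s ≤ t ∧ t ≤ s + m ∧ x = c (cidx (by omega) ((i : ℕ) + t))} := by
  intro u hu
  have hk0 : 0 < k := by omega
  obtain ⟨j, m, hA⟩ := hcyc u hu
  have hi : (i : ℕ) < k := i.isLt
  by_cases hm : k - 1 ≤ m
  · -- the leaf set is everything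
    refine ⟨1, k - 1, le_refl _, by omega, ?_⟩
    rw [hA]; ext x
    simp only [Set.mem_setOf_eq]
    constructor
    · rintro ⟨t, ht, rfl⟩
      refine ⟨(j + t + (k - 1 - (i : ℕ))) % k + 1, by omega,
        by have := Nat.mod_lt (j + t + (k - 1 - (i : ℕ))) hk0; omega, ?_⟩
      congr 1
      refine cidx_congr hk0 (Eq.symm ?_)
      have h1 : (i : ℕ) + ((j + t + (k - 1 - (i : ℕ))) % k + 1) ≡
          (i : ℕ) + ((j + t + (k - 1 - (i : ℕ))) + 1) [MOD k] :=
        Nat.ModEq.add_left _ (((Nat.mod_modEq _ k)).add_right 1)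
      have h2 : (i : ℕ) + ((j + t + (k - 1 - (i : ℕ))) + 1) = j + t + k := by omega
      have h3 : (j + t + k) % k = (j + t) % k := Nat.add_mod_right _ _
      calc ((i : ℕ) + ((j + t + (k - 1 - (i : ℕ))) % k + 1)) % k
          = ((i : ℕ) + ((j + t + (k - 1 - (i : ℕ))) + 1)) % k := h1
        _ = (j + t + k) % k := by rw [h2]
        _ = (j + t) % k := h3
    · rintro ⟨t, ht1, ht2, rfl⟩
      refine ⟨((i : ℕ) + t + (k - j % k)) % k, ?_, ?_⟩
      · have := Nat.mod_lt ((i : ℕ) + t + (k - j % k)) hk0; omega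
      · congr 1
        refine cidx_congr hk0 (Eq.symm ?_)
        have hjk : j % k < k := Nat.mod_lt _ hk0
        have h1 : j + ((i : ℕ) + t + (k - j % k)) % k ≡
            j + ((i : ℕ) + t + (k - j % k)) [MOD k] :=
          Nat.ModEq.add_left _ (Nat.mod_modEq _ k)
        have h2 : j + ((i : ℕ) + t + (k - j % k)) ≡
            j % k + ((i : ℕ) + t + (k - j % k)) [MOD k] :=
          Nat.ModEq.add_right _ (Nat.mod_modEq j k).symm
        have h3 : j % k + ((i : ℕ) + t + (k - j % k)) = (i : ℕ) + t + k := by omega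
        calc (j + ((i : ℕ) + t + (k - j % k)) % k) % k
            = (j + ((i : ℕ) + t + (k - j % k))) % k := h1
          _ = (j % k + ((i : ℕ) + t + (k - j % k))) % k := h2
          _ = ((i : ℕ) + t + k) % k := by rw [h3]
          _ = ((i : ℕ) + t) % k := Nat.add_mod_right _ _
  · -- m ≤ k - 2
    have hm' : m ≤ k - 2 := by omega
    set s : ℕ := (j + (k - 1 - (i : ℕ))) % k + 1 with hs
    have hsk : s ≤ k := by
      have := Nat.mod_lt (j + (k - 1 - (i : ℕ))) hk0; omega
    have hs1 : 1 ≤ s := by omega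
    have hsj : ((i : ℕ) + s) % k = j % k := by
      have h1 : (i : ℕ) + ((j + (k - 1 - (i : ℕ))) % k + 1) ≡
          (i : ℕ) + ((j + (k - 1 - (i : ℕ))) + 1) [MOD k] :=
        Nat.ModEq.add_left _ (((Nat.mod_modEq _ k)).add_right 1)
      have h2 : (i : ℕ) + ((j + (k - 1 - (i : ℕ))) + 1) = j + k := by omega
      calc ((i : ℕ) + s) % k = ((i : ℕ) + ((j + (k - 1 - (i : ℕ))) + 1)) % k := h1
        _ = (j + k) % k := by rw [h2]
        _ = j % k := Nat.add_mod_right _ _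
    by_cases hsm : s + m ≤ k
    · refine ⟨s, m, hs1, hsm, ?_⟩
      rw [hA]; ext x
      simp only [Set.mem_setOf_eq]
      constructor
      · rintro ⟨t, ht, rfl⟩
        refine ⟨s + t, by omega, by omega, ?_⟩
        congr 1
        apply cidx_congr
        have := Nat.ModEq.add_right t hsj
        calc (j + t) % k = ((i : ℕ) + s + t) % k := this.symm
          _ = ((i : ℕ) + (s + t)) % k := by rw [Nat.add_assoc]
      · rintro ⟨t, ht1, ht2, rfl⟩
        refine ⟨t - s, by omega, ?_⟩
        congr 1
        apply cidx_congr
        have := Nat.ModEq.add_right (t - s) hsj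
        calc ((i : ℕ) + t) % k = ((i : ℕ) + s + (t - s)) % k := by
              congr 1; omega
          _ = (j + (t - s)) % k := this
    · -- impossible: the leaf set would contain both c i and c (i+1)
      exfalso
      have hci : c i ∈ LeafSet T r u := by
        rw [hA]
        refine ⟨k - s, by omega, ?_⟩
        have : cidx hk0 (j + (k - s)) = i := by
          apply Fin.ext
          show (j + (k - s)) % k = (i : ℕ)
          have h1 := Nat.ModEq.add_right (k - s) hsj
          have h2 : (i : ℕ) + s + (k - s) = (i : ℕ) + k := by omega
          calc (j + (k - s)) % k = ((i : ℕ) + s + (k - s)) % k := h1.symm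
            _ = ((i : ℕ) + k) % k := by rw [h2]
            _ = (i : ℕ) % k := Nat.add_mod_right _ _
            _ = (i : ℕ) := Nat.mod_eq_of_lt hi
        rw [this]
      have hci1 : c (cidx hk0 ((i : ℕ) + 1)) ∈ LeafSet T r u := by
        rw [hA]
        refine ⟨k + 1 - s, by omega, ?_⟩
        have : cidx hk0 (j + (k + 1 - s)) = cidx hk0 ((i : ℕ) + 1) := by
          apply cidx_congr
          have h1 := Nat.ModEq.add_right (k + 1 - s) hsj
          have h2 : (i : ℕ) + s + (k + 1 - s) = (i : ℕ) + 1 + k := by omega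
          calc (j + (k + 1 - s)) % k = ((i : ℕ) + s + (k + 1 - s)) % k := h1.symm
            _ = ((i : ℕ) + 1 + k) % k := by rw [h2]
            _ = ((i : ℕ) + 1) % k := Nat.add_mod_right _ _
        rw [this]
      obtain ⟨-, hanc_i⟩ := hci
      obtain ⟨-, hanc_i1⟩ := hci1
      by_cases hur : u = r
      · -- then the leaf set is everything, too big for m ≤ k - 2
        have hsurj : Function.Surjective (fun t : Fin (m + 1) => cidx hk0 (j + (t : ℕ))) := by
          intro a
          have hca : c a ∈ LeafSet T r u := by
            refine ⟨(hleaf (c a)).mpr ⟨a, rfl⟩, ?_⟩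
            intro p _
            rw [hur]
            exact p.start_mem_support
          rw [hA] at hca
          obtain ⟨t, ht, hct⟩ := hca
          exact ⟨⟨t, by omega⟩, (hinj hct).symm⟩
        have := Fintype.card_le_of_surjective _ hsurj
        simp only [Fintype.card_fin] at this
        omega
      · -- tree contradiction: u lies strictly on both sides of r on the path
        haveI : DecidableEq V := Classical.decEq V
        obtain ⟨w⟩ := hT.isConnected.preconnected (c i) (c (cidx hk0 ((i : ℕ) + 1)))
        set p := w.bypass with hpdef
        have hp : p.IsPath := w.bypass_isPath
        have hrp : r ∈ p.support := hrpath p hp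
        set q1 := p.takeUntil r hrp with hq1def
        set q2 := p.dropUntil r hrp with hq2def
        have hq1 : q1.IsPath := hp.takeUntil hrp
        have hq2 : q2.IsPath := hp.dropUntil hrp
        have hu1 : u ∈ q1.support := by
          have := hanc_i q1.reverse hq1.reverse
          rwa [Walk.support_reverse, List.mem_reverse] at this
        have hu2 : u ∈ q2.support := hanc_i1 q2 hq2
        have hu2' : u ∈ q2.support.tail := by
          have := q2.support_eq_cons
          rw [this] at hu2
          rcases List.mem_cons.mp hu2 with h | h
          · exact absurd h hur
          · exact h
        have hnd : p.support.Nodup := hp.support_nodup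
        rw [← p.take_spec hrp, Walk.support_append, List.nodup_append] at hnd
        exact hnd.2.2 u hu1 u hu2' rfl
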